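/- In the recursive construction H_c built on the tree T(n_{c-1}, m) — whose vertical hyperedges are root-to-leaf paths and whose horizontal hyperedges come from copies of H_{c-1} on each sibling set — every c-coloring of the vertices contains a monochromatic hyperedge. -/
import Mathlib


/-- Vertices of the full tree with branching set `W` whose root-to-leaf paths have
`m` vertices: lists over `W` of length `< m`. -/
abbrev TreeW (W : Type) (m : ℕ) := {l : List W // l.length < m}

/-- The horizontal hyperedge on the children of the internal node `p` induced by a
hyperedge `A` of a hypergraph on the branching set `W` (a copy of `H_{c-1}`). -/
def horizW (W : Type) (m : ℕ) (p : List W) (A : Set W) : Set (TreeW W m) :=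
  {v | ∃ w ∈ A, v.val = p ++ [w]}

/-- The vertical hyperedge of a leaf: all vertices of the root-to-leaf path. -/
def vertW (W : Type) (m : ℕ) (leaf : List W) : Set (TreeW W m) :=
  {v | v.val <+: leaf}

/-- Hyperedges of the recursive hypergraph `H_c` built on the tree `T(W, m)` from a
hypergraph with edge set `E'` on the branching set `W`: all root-to-leaf paths
(vertical hyperedges) and, for each internal vertex, a copy of `E'` on its children
(horizontal hyperedges). -/
def recEdges (W : Type) (m : ℕ) (E' : Set (Set W)) : Set (Set (TreeW W m)) :=
  {E | (∃ p : List W, p.length + 1 < m ∧ ∃ A ∈ E', E = horizW W m p A) ∨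
       (∃ l : List W, l.length = m - 1 ∧ E = vertW W m l)}

/-- The key inductive step of the recursive construction: if the hypergraph `E'`
(playing the role of `H_{c-1}`) on the branching set `W` is not `(c-1)`-colorable,
then the hypergraph `H_c` on `T(W, m)` — vertical hyperedges the root-to-leaf paths,
horizontal hyperedges the copies of `E'` on the sibling sets — is not `c`-colorable:
every `c`-coloring of its vertices contains a monochromatic hyperedge. -/
lemma stmt6_aux {c : ℕ} (b x : Fin c) (h : x ≠ b) :
    (if x.val < b.val then x.val else x.val - 1) < c - 1 := by
  have hx := x.isLt; have hb := b.isLt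
  have hne : x.val ≠ b.val := Fin.val_ne_of_ne h
  split <;> omega

theorem stmt6 (m c : ℕ) (hm : 2 ≤ m) (hc : 2 < c)
    (W : Type) (E' : Set (Set W))
    (hW : ∀ col' : W → Fin (c - 1), ∃ A ∈ E', ∃ b : Fin (c - 1), ∀ w ∈ A, col' w = b) :
    ∀ col : TreeW W m → Fin c,
      ∃ E ∈ recEdges W m E', ∃ b : Fin c, ∀ v ∈ E, col v = b := by
  intro col
  by_cases h : ∃ p : List W, ∃ hp : p.length + 1 < m, ∃ b : Fin c,
      ∀ w : W, col ⟨p ++ [w], by simpa using hp⟩ ≠ b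
  · -- horizontal case
    obtain ⟨p, hp, b, hb⟩ := h
    have hlen : ∀ w : W, (p ++ [w]).length < m := fun w => by simpa using hp
    set col' : W → Fin (c - 1) := fun w =>
      ⟨if (col ⟨p ++ [w], hlen w⟩).val < b.val then (col ⟨p ++ [w], hlen w⟩).val
        else (col ⟨p ++ [w], hlen w⟩).val - 1, stmt6_aux b _ (hb w)⟩ with hcol'
    obtain ⟨A, hA, b', hmono⟩ := hW col'
    refine ⟨horizW W m p A, Or.inl ⟨p, hp, A, hA, rfl⟩,
      ⟨if b'.val < b.val then b'.val else b'.val + 1, by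
        have := b'.isLt; have := b.isLt; split <;> omega⟩, ?_⟩
    rintro v ⟨w, hwA, hval⟩
    have hv : v = ⟨p ++ [w], hlen w⟩ := Subtype.ext hval
    subst hv
    have h1 : (col' w).val = b'.val := congrArg Fin.val (hmono w hwA)
    have h2 : (col ⟨p ++ [w], hlen w⟩).val ≠ b.val := Fin.val_ne_of_ne (hb w)
    have hx := (col ⟨p ++ [w], hlen w⟩).isLt
    have hbb := b.isLt
    apply Fin.ext
    show (col ⟨p ++ [w], hlen w⟩).val = if b'.val < b.val then b'.val else b'.val + 1
    simp only [hcol'] at h1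
    split at h1 <;> split <;> omega
  · -- vertical case
    push_neg at h
    have h0 : ([] : List W).length < m := by simp; omega
    set b0 := col ⟨[], h0⟩ with hb0
    have claim : ∀ k, k ≤ m - 1 → ∃ l : List W, l.length = k ∧
        ∀ (t : List W) (ht : t.length < m), t <+: l → col ⟨t, ht⟩ = b0 := by
      intro k
      induction k with
      | zero =>
        intro _
        refine ⟨[], rfl, ?_⟩
        intro t ht htp
        have : t = [] := List.prefix_nil.mp htp
        subst this; rfl
      | succ k ih =>
        intro hk1
        obtain ⟨l, hl, hcol⟩ := ih (by omega)
        have hp : l.length + 1 < m := by omega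
        obtain ⟨w, hw⟩ := h l hp b0
        refine ⟨l ++ [w], by simp [hl], ?_⟩
        intro t ht htp
        by_cases hle : t.length ≤ l.length
        · exact hcol t ht (List.prefix_of_prefix_length_le htp (l.prefix_append [w]) hle)
        · have hlen : t.length = (l ++ [w]).length := by
            have := htp.length_le
            simp at this ⊢
            omega
          have : t = l ++ [w] := htp.eq_of_length hlen
          subst this
          exact hw
    obtain ⟨l, hl, hcol⟩ := claim (m - 1) le_rfl
    refine ⟨vertW W m l, Or.inr ⟨l, hl, rfl⟩, b0, ?_⟩
    intro v hv
    exact hcol v.val v.property hv
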